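/- Let α > 1 and define φ_α(t) = (α^t − 1)(α + 1)/((α^t + 1)(α − 1)). Then φ_α(t) < (α + 1)/(α − 1) for every t > 0, and φ_α(t) → (α + 1)/(α − 1) as t → ∞. Consequently, for every K-sparse α-strongly-decaying vector x ∈ ℝⁿ one has ‖x‖₁² ≤ ((α + 1)/(α − 1)) · ‖x‖₂², a bound independent of K. -/

import Mathlib

open Real Filter

noncomputable section

/-- The disparity function `φ_α(t) = (α^t − 1)(α + 1)/((α^t + 1)(α − 1))`. -/
def phiDecay (α t : ℝ) : ℝ := (α ^ t - 1) * (α + 1) / ((α ^ t + 1) * (α - 1))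

/-- `x` is a `K`-sparse `α`-strongly-decaying vector. -/
def StronglyDecaying {n : ℕ} (α : ℝ) (K : ℕ) (x : Fin n → ℝ) : Prop :=
  ∃ σ : Equiv.Perm (Fin n),
    (∀ i j : Fin n, i ≤ j → |x (σ j)| ≤ |x (σ i)|) ∧
    (∀ i : Fin n, K ≤ (i : ℕ) → x (σ i) = 0) ∧
    (∀ i j : Fin n, (j : ℕ) = (i : ℕ) + 1 → (j : ℕ) < K → α * |x (σ j)| ≤ |x (σ i)|)

/-- Geometric tail bound for an `α`-decaying nonnegative sequence. -/
lemma decay_sum_le (α : ℝ) (hα : 1 < α) (b : ℕ → ℝ) (hb : ∀ m, 0 ≤ b m)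
    (hd : ∀ m, α * b (m + 1) ≤ b m) :
    ∀ (n s : ℕ), (α - 1) * ∑ m ∈ Finset.range n, b (s + m) ≤ α * b s := by
  intro n
  induction n with
  | zero =>
    intro s
    simp only [Finset.range_zero, Finset.sum_empty, mul_zero]
    have := hb s
    nlinarith
  | succ n ih =>
    intro s
    rw [Finset.sum_range_succ']
    have e : ∀ i, b (s + (i + 1)) = b (s + 1 + i) := fun i => by
      congr 1; omega
    simp only [e, Nat.add_zero]
    have h1 := ih (s + 1)
    have h2 := hd s
    have hb1 := hb (s + 1)
    nlinarith

/-- Main induction: squared sum bound for an `α`-decaying nonnegative sequence. -/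
lemma decay_sq_sum (α : ℝ) (hα : 1 < α) (b : ℕ → ℝ) (hb : ∀ m, 0 ≤ b m)
    (hd : ∀ m, α * b (m + 1) ≤ b m) :
    ∀ (n s : ℕ), (α - 1) * (∑ m ∈ Finset.range n, b (s + m)) ^ 2 ≤
      (α + 1) * ∑ m ∈ Finset.range n, b (s + m) ^ 2 := by
  intro n
  induction n with
  | zero =>
    intro s
    simp
  | succ n ih =>
    intro s
    rw [Finset.sum_range_succ', Finset.sum_range_succ']
    have e : ∀ i, b (s + (i + 1)) = b (s + 1 + i) := fun i => by
      congr 1; omega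
    simp only [e, Nat.add_zero]
    have h1 := ih (s + 1)
    -- tail sum bound
    have h2 := decay_sum_le α hα b hb hd n (s + 1)
    have h3 := hd s
    have hbs := hb s
    have hb1 := hb (s + 1)
    have hT : 0 ≤ ∑ m ∈ Finset.range n, b (s + 1 + m) :=
      Finset.sum_nonneg fun m _ => hb _
    -- (α-1) * T ≤ b s
    have hT2 : (α - 1) * ∑ m ∈ Finset.range n, b (s + 1 + m) ≤ b s := by
      nlinarith
    nlinarith [mul_le_mul_of_nonneg_right hT2 hbs]

theorem phiDecay_lt_limit (α : ℝ) (hα : 1 < α) :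
    (∀ t : ℝ, 0 < t → phiDecay α t < (α + 1) / (α - 1)) ∧
    Tendsto (fun t : ℝ => phiDecay α t) atTop (nhds ((α + 1) / (α - 1))) ∧
    ∀ (n K : ℕ) (x : Fin n → ℝ), StronglyDecaying α K x →
      (∑ i, |x i|) ^ 2 ≤ (α + 1) / (α - 1) * ∑ i, (x i) ^ 2 := by
  have hα0 : (0 : ℝ) < α := by linarith
  have hα1 : (0 : ℝ) < α - 1 := by linarith
  refine ⟨?_, ?_, ?_⟩
  · -- pointwise strict bound
    intro t ht
    have hpos : (0 : ℝ) < α ^ t := rpow_pos_of_pos hα0 t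
    unfold phiDecay
    rw [div_lt_div_iff₀ (by nlinarith) hα1]
    nlinarith
  · -- the limit
    have hexp : Tendsto (fun t : ℝ => α ^ t) atTop atTop := by
      have hlog : (0 : ℝ) < Real.log α := Real.log_pos hα
      have h1 : Tendsto (fun t : ℝ => Real.log α * t) atTop atTop :=
        Tendsto.const_mul_atTop hlog tendsto_id
      have h2 : Tendsto (fun t : ℝ => Real.exp (Real.log α * t)) atTop atTop :=
        Real.tendsto_exp_atTop.comp h1
      refine h2.congr fun t => ?_
      rw [← Real.exp_log hα0, ← Real.exp_mul, Real.exp_log hα0]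
    have hfrac : Tendsto (fun u : ℝ => (u - 1) / (u + 1)) atTop (nhds 1) := by
      have h0 : Tendsto (fun u : ℝ => u + 1) atTop atTop :=
        tendsto_atTop_add_const_right _ 1 tendsto_id
      have h1 : Tendsto (fun u : ℝ => 2 / (u + 1)) atTop (nhds 0) :=
        Tendsto.div_atTop tendsto_const_nhds h0
      have h2 : Tendsto (fun u : ℝ => 1 - 2 / (u + 1)) atTop (nhds (1 - 0)) :=
        tendsto_const_nhds.sub h1
      rw [sub_zero] at h2
      refine h2.congr' ?_
      filter_upwards [eventually_gt_atTop (0 : ℝ)] with u hu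
      have h3 : u + 1 ≠ 0 := by linarith
      field_simp
      ring
    have hcomp : Tendsto (fun t : ℝ => (α ^ t - 1) / (α ^ t + 1)) atTop (nhds 1) :=
      hfrac.comp hexp
    have hmul : Tendsto (fun t : ℝ => (α ^ t - 1) / (α ^ t + 1) * ((α + 1) / (α - 1)))
        atTop (nhds (1 * ((α + 1) / (α - 1)))) := hcomp.mul_const _
    rw [one_mul] at hmul
    refine hmul.congr fun t => ?_
    unfold phiDecay
    rw [div_mul_div_comm]
  · -- the sparse-vector bound
    intro n K x ⟨σ, hmono, hsparse, hdecay⟩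
    set b : ℕ → ℝ := fun m => if h : m < n then |x (σ ⟨m, h⟩)| else 0 with hbdef
    have hb : ∀ m, 0 ≤ b m := by
      intro m
      by_cases h : m < n <;> simp [hbdef, h, abs_nonneg]
    have hd : ∀ m, α * b (m + 1) ≤ b m := by
      intro m
      by_cases h1 : m + 1 < n
      · have h0 : m < n := by omega
        by_cases h2 : m + 1 < K
        · have := hdecay ⟨m, h0⟩ ⟨m + 1, h1⟩ rfl h2
          simpa [hbdef, h0, h1] using this
        · have hK : K ≤ m + 1 := by omega
          have hz : x (σ ⟨m + 1, h1⟩) = 0 := hsparse ⟨m + 1, h1⟩ (by simpa using hK)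
          simp [hbdef, h0, h1, hz, abs_nonneg]
      · simp [hbdef, h1, hb m]
        exact hb m
    have key := decay_sq_sum α hα b hb hd n 0
    simp only [Nat.zero_add] at key
    -- identify the sums
    have hS : ∑ i, |x i| = ∑ m ∈ Finset.range n, b m := by
      rw [← Equiv.sum_comp σ (fun i => |x i|), ← Fin.sum_univ_eq_sum_range b n]
      refine Finset.sum_congr rfl fun i _ => ?_
      simp [hbdef, i.isLt]
    have hQ : ∑ i, (x i) ^ 2 = ∑ m ∈ Finset.range n, b m ^ 2 := by
      rw [← Equiv.sum_comp σ (fun i => (x i) ^ 2), ← Fin.sum_univ_eq_sum_range (fun m => b m ^ 2) n]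
      refine Finset.sum_congr rfl fun i _ => ?_
      simp [hbdef, i.isLt, sq_abs]
    rw [hS, hQ]
    rw [div_mul_eq_mul_div, le_div_iff₀ hα1]
    nlinarith [key]

end
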